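/- Under the assumptions of the previous statement (Φ L-smooth, concave in y, and the inner problem μ-strongly concave via Φ or h), the max function φ(x) := max_y { Φ(x,y) − h(y) } is differentiable with ∇φ(x) = ∇_x Φ(x, y*(x)), and ∇φ is Lipschitz continuous with constant L(1 + κ), where κ = max{L/μ, 1}. -/

import Mathlib

open scoped RealInnerProductSpace

set_option linter.unusedSectionVars false
set_option maxHeartbeats 1000000

section Aux
variable {E : Type*} [NormedAddCommGroup E] [InnerProductSpace ℝ E] [CompleteSpace E]

lemma seg_norm_le' {x x' z : E} (hz : z ∈ segment ℝ x x') : ‖z - x‖ ≤ ‖x' - x‖ := by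
  obtain ⟨a, b, ha, hb, hab, rfl⟩ := hz
  have h1 : a • x + b • x' - x = b • (x' - x) := by
    have : a = 1 - b := by linarith
    subst this; module
  rw [h1, norm_smul, Real.norm_eq_abs, abs_of_nonneg hb]
  exact mul_le_of_le_one_left (norm_nonneg _) (by linarith)

lemma aux_taylor' (f : E → ℝ) (g : E → E) (hf : ∀ z, HasGradientAt f (g z) z)
    (L : ℝ) (hL : 0 ≤ L) (x x' : E) (hb : ∀ z, ‖g z - g x‖ ≤ L * ‖z - x‖) :
    |f x' - f x - ⟪g x, x' - x⟫| ≤ L * ‖x' - x‖ ^ 2 := by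
  set T := InnerProductSpace.toDual ℝ E
  have key := Convex.norm_image_sub_le_of_norm_hasFDerivWithin_le
    (f := fun z => f z - T (g x) z) (f' := fun z => T (g z) - T (g x))
    (s := segment ℝ x x') (C := L * ‖x' - x‖) (x := x) (y := x')
    (fun z _ => (((hf z).hasFDerivAt).sub ((T (g x)).hasFDerivAt)).hasFDerivWithinAt)
    (fun z hz => by
      show ‖T (g z) - T (g x)‖ ≤ L * ‖x' - x‖
      rw [← map_sub, T.norm_map]
      calc ‖g z - g x‖ ≤ L * ‖z - x‖ := hb z
        _ ≤ L * ‖x' - x‖ := mul_le_mul_of_nonneg_left (seg_norm_le' hz) hL)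
    (convex_segment x x') (left_mem_segment ℝ x x') (right_mem_segment ℝ x x')
  have h2 : (f x' - T (g x) x') - (f x - T (g x) x) = f x' - f x - ⟪g x, x' - x⟫ := by
    simp only [T, InnerProductSpace.toDual_apply_apply, inner_sub_right]; ring
  rw [h2, Real.norm_eq_abs] at key
  calc |f x' - f x - ⟪g x, x' - x⟫| ≤ L * ‖x' - x‖ * ‖x' - x‖ := key
    _ = L * ‖x' - x‖ ^ 2 := by ring

lemma aux_lip' (f : E → ℝ) (g : E → E) (hf : ∀ z, HasGradientAt f (g z) z)
    (C : ℝ) (hb : ∀ z, ‖g z‖ ≤ C) (y₁ y₂ : E) : |f y₁ - f y₂| ≤ C * ‖y₁ - y₂‖ := by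
  set T := InnerProductSpace.toDual ℝ E
  have key := Convex.norm_image_sub_le_of_norm_hasFDerivWithin_le
    (f := f) (f' := fun z => T (g z)) (s := (Set.univ : Set E)) (C := C) (x := y₂) (y := y₁)
    (fun z _ => ((hf z).hasFDerivAt).hasFDerivWithinAt)
    (fun z _ => by rw [T.norm_map]; exact hb z)
    convex_univ (Set.mem_univ _) (Set.mem_univ _)
  rwa [Real.norm_eq_abs] at key

lemma norm_combo' (a b : ℝ) (hab : a + b = 1) (y₀ y : E) :
    ‖a • y₀ + b • y‖ ^ 2 = a * ‖y₀‖ ^ 2 + b * ‖y‖ ^ 2 - a * b * ‖y - y₀‖ ^ 2 := by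
  have e1 : ‖a • y₀ + b • y‖ ^ 2 = ⟪a • y₀ + b • y, a • y₀ + b • y⟫ :=
    (real_inner_self_eq_norm_sq _).symm
  have e2 : ‖y₀‖ ^ 2 = ⟪y₀, y₀⟫ := (real_inner_self_eq_norm_sq _).symm
  have e3 : ‖y‖ ^ 2 = ⟪y, y⟫ := (real_inner_self_eq_norm_sq _).symm
  have e4 : ‖y - y₀‖ ^ 2 = ⟪y - y₀, y - y₀⟫ := (real_inner_self_eq_norm_sq _).symm
  rw [e1, e2, e3, e4]
  simp only [inner_add_add_self, inner_sub_sub_self, real_inner_smul_left,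
    real_inner_smul_right]
  have : a = 1 - b := by linarith
  subst this
  rw [real_inner_comm y₀ y]
  ring

end Aux

/-- Convexity for extended-real-valued functions, via the secant inequality. -/
def ERealConvexOn {E : Type*} [AddCommGroup E] [Module ℝ E] (g : E → EReal) : Prop :=
  ∀ x y : E, ∀ a b : ℝ, 0 ≤ a → 0 ≤ b → a + b = 1 →
    g (a • x + b • y) ≤ (a : EReal) * g x + (b : EReal) * g y

/-- Danskin, smooth strongly concave case: the max function
`φ(x) = max_y {Φ(x,y) - h(y)} = Φ(x, y*(x)) - h(y*(x))` is differentiable with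
`∇φ(x) = ∇_x Φ(x, y*(x))`, and `∇φ` is Lipschitz with constant `L(1+κ)`,
`κ = max{L/μ, 1}`. -/
theorem stmt10 {d n : ℕ}
    (Φ : EuclideanSpace ℝ (Fin d) → EuclideanSpace ℝ (Fin n) → ℝ)
    (Gx : EuclideanSpace ℝ (Fin d) → EuclideanSpace ℝ (Fin n) → EuclideanSpace ℝ (Fin d))
    (Gy : EuclideanSpace ℝ (Fin d) → EuclideanSpace ℝ (Fin n) → EuclideanSpace ℝ (Fin n))
    (hGx : ∀ x y, HasGradientAt (fun x' => Φ x' y) (Gx x y) x)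
    (hGy : ∀ x y, HasGradientAt (fun y' => Φ x y') (Gy x y) y)
    (L μ : ℝ) (hL : 0 < L) (hμ : 0 < μ)
    (hsmooth : ∀ x x' y y',
      ‖Gx x y - Gx x' y'‖ ^ 2 + ‖Gy x y - Gy x' y'‖ ^ 2
        ≤ L ^ 2 * (‖x - x'‖ ^ 2 + ‖y - y'‖ ^ 2))
    (hconc : ∀ x, ConcaveOn ℝ Set.univ (fun y => Φ x y))
    (h : EuclideanSpace ℝ (Fin n) → EReal)
    (hhproper : (∀ y, h y ≠ ⊥) ∧ ∃ y, h y ≠ ⊤)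
    (hhconv : ERealConvexOn h) (hhlsc : LowerSemicontinuous h)
    (hstrong : (∀ x, ConcaveOn ℝ Set.univ (fun y => Φ x y + μ / 2 * ‖y‖ ^ 2)) ∨
      ERealConvexOn (fun y => h y + ((-(μ / 2) * ‖y‖ ^ 2 : ℝ) : EReal)))
    (κ : ℝ) (hκ : κ = max (L / μ) 1)
    (ystar : EuclideanSpace ℝ (Fin d) → EuclideanSpace ℝ (Fin n))
    (hystar : ∀ x z, ((Φ x z : ℝ) : EReal) - h z
        ≤ ((Φ x (ystar x) : ℝ) : EReal) - h (ystar x))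
    (φ : EuclideanSpace ℝ (Fin d) → ℝ)
    (hφ : ∀ x, (φ x : EReal) = ((Φ x (ystar x) : ℝ) : EReal) - h (ystar x)) :
    (∀ x, HasGradientAt φ (Gx x (ystar x)) x) ∧
    (∀ x x', ‖Gx x (ystar x) - Gx x' (ystar x')‖ ≤ L * (1 + κ) * ‖x - x'‖) := by
  have hκ1 : 1 ≤ κ := hκ ▸ le_max_right _ _
  have hκLμ : L / μ ≤ κ := hκ ▸ le_max_left _ _
  -- consequences of joint smoothness
  have hGxLipx : ∀ x x' y, ‖Gx x y - Gx x' y‖ ≤ L * ‖x - x'‖ := by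
    intro x x' y
    have := hsmooth x x' y y
    simp only [sub_self, norm_zero] at this
    have h2 : ‖Gx x y - Gx x' y‖ ^ 2 ≤ (L * ‖x - x'‖) ^ 2 := by
      nlinarith [sq_nonneg ‖Gy x y - Gy x' y‖]
    exact (abs_le_of_sq_le_sq' h2 (by positivity)).2
  have hGxLipy : ∀ x y y', ‖Gx x y - Gx x y'‖ ≤ L * ‖y - y'‖ := by
    intro x y y'
    have := hsmooth x x y y'
    simp only [sub_self, norm_zero] at this
    have h2 : ‖Gx x y - Gx x y'‖ ^ 2 ≤ (L * ‖y - y'‖) ^ 2 := by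
      nlinarith [sq_nonneg ‖Gy x y - Gy x y'‖]
    exact (abs_le_of_sq_le_sq' h2 (by positivity)).2
  have hGyLipx : ∀ x x' y, ‖Gy x y - Gy x' y‖ ≤ L * ‖x - x'‖ := by
    intro x x' y
    have := hsmooth x x' y y
    simp only [sub_self, norm_zero] at this
    have h2 : ‖Gy x y - Gy x' y‖ ^ 2 ≤ (L * ‖x - x'‖) ^ 2 := by
      nlinarith [sq_nonneg ‖Gx x y - Gx x' y‖]
    exact (abs_le_of_sq_le_sq' h2 (by positivity)).2
  -- h is real-valued at the maximizers
  have hrreal : ∀ x, ∃ r : ℝ, h (ystar x) = (r : EReal) := by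
    intro x
    have hne_bot := hhproper.1 (ystar x)
    have hne_top : h (ystar x) ≠ ⊤ := by
      intro htop
      have h1 := hφ x
      rw [htop, EReal.sub_top] at h1
      exact EReal.coe_ne_bot _ h1
    exact ⟨(h (ystar x)).toReal, (EReal.coe_toReal hne_top hne_bot).symm⟩
  choose hr hhr using hrreal
  have hφr : ∀ x, φ x = Φ x (ystar x) - hr x := by
    intro x
    have h1 := hφ x
    rw [hhr x, ← EReal.coe_sub] at h1
    exact_mod_cast h1
  have hsand : ∀ x x', Φ x' (ystar x) - hr x ≤ φ x' := by
    intro x x'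
    have h1 := hystar x' (ystar x)
    rw [← hφ x', hhr x, ← EReal.coe_sub] at h1
    exact_mod_cast h1
  -- quadratic growth at maximizer via strong concavity
  have hquad : ∀ x x',
      Φ x (ystar x') - hr x' + μ / 2 * ‖ystar x' - ystar x‖ ^ 2 ≤ φ x := by
    intro x x'
    set y₀ := ystar x with hy₀
    set y' := ystar x' with hy'
    set q := ‖y' - y₀‖ ^ 2 with hq
    clear_value y₀ y'
    have hq0 : 0 ≤ q := hq ▸ sq_nonneg _
    have hhr0 : h y₀ = ((hr x : ℝ) : EReal) := by rw [hy₀]; exact hhr x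
    have hhr1 : h y' = ((hr x' : ℝ) : EReal) := by rw [hy']; exact hhr x'
    have step : ∀ t ∈ Set.Ioo (0:ℝ) 1,
        Φ x y' - hr x' + μ / 2 * (1 - t) * q ≤ φ x := by
      intro t ht
      obtain ⟨ht0, ht1⟩ := ht
      have ha : (0:ℝ) ≤ 1 - t := by linarith
      have hb : (0:ℝ) ≤ t := le_of_lt ht0
      have hab : (1 - t) + t = 1 := by ring
      set yt := (1 - t) • y₀ + t • y' with hyt
      clear_value yt
      have hnorm : ‖yt‖ ^ 2
          = (1 - t) * ‖y₀‖ ^ 2 + t * ‖y'‖ ^ 2 - (1 - t) * t * q := by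
        rw [hyt, hq]; exact norm_combo' (1 - t) t hab y₀ y'
      have hΦh : (((1 - t) * Φ x y₀ + t * Φ x y' + μ / 2 * ((1 - t) * t) * q
            - ((1 - t) * hr x + t * hr x') : ℝ) : EReal) ≤ ((Φ x yt : ℝ) : EReal) - h yt := by
        rcases hstrong with hA | hB
        · -- Φ is strongly concave
          have hc := (hA x).2 (Set.mem_univ y₀) (Set.mem_univ y') ha hb hab
          simp only [smul_eq_mul] at hc
          rw [← hyt] at hc
          have hnorm2 : μ / 2 * ‖yt‖ ^ 2
              = μ / 2 * ((1 - t) * ‖y₀‖ ^ 2 + t * ‖y'‖ ^ 2 - (1 - t) * t * q) := by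
            rw [hnorm]
          have hΦlow : (1 - t) * Φ x y₀ + t * Φ x y' + μ / 2 * ((1 - t) * t) * q
              ≤ Φ x yt := by nlinarith [hc, hnorm2]
          have hh := hhconv y₀ y' (1 - t) t ha hb hab
          rw [← hyt, hhr0, hhr1] at hh
          have hh' : h yt ≤ (((1 - t) * hr x + t * hr x' : ℝ) : EReal) := by
            refine hh.trans_eq ?_
            norm_cast
          calc (((1 - t) * Φ x y₀ + t * Φ x y' + μ / 2 * ((1 - t) * t) * q
                - ((1 - t) * hr x + t * hr x') : ℝ) : EReal)
              ≤ ((Φ x yt - ((1 - t) * hr x + t * hr x') : ℝ) : EReal) := by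
                exact_mod_cast (by linarith :
                  (1 - t) * Φ x y₀ + t * Φ x y' + μ / 2 * ((1 - t) * t) * q
                  - ((1 - t) * hr x + t * hr x')
                  ≤ Φ x yt - ((1 - t) * hr x + t * hr x'))
            _ = ((Φ x yt : ℝ) : EReal) - (((1 - t) * hr x + t * hr x' : ℝ) : EReal) := by
                rw [← EReal.coe_sub]
            _ ≤ ((Φ x yt : ℝ) : EReal) - h yt := EReal.sub_le_sub le_rfl hh'
        · -- h is strongly convex
          have hc := (hconc x).2 (Set.mem_univ y₀) (Set.mem_univ y') ha hb hab
          simp only [smul_eq_mul] at hc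
          rw [← hyt] at hc
          have hB' := hB y₀ y' (1 - t) t ha hb hab
          simp only [← hyt] at hB'
          rw [hhr0, hhr1] at hB'
          have hRHS : ((1 - t : ℝ) : EReal) * (((hr x : ℝ) : EReal)
                + ((-(μ / 2) * ‖y₀‖ ^ 2 : ℝ) : EReal))
              + ((t : ℝ) : EReal) * (((hr x' : ℝ) : EReal)
                + ((-(μ / 2) * ‖y'‖ ^ 2 : ℝ) : EReal))
              = (((1 - t) * (hr x + -(μ / 2) * ‖y₀‖ ^ 2)
                  + t * (hr x' + -(μ / 2) * ‖y'‖ ^ 2) : ℝ) : EReal) := by norm_cast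
          rw [hRHS] at hB'
          have hh' : h yt ≤ (((1 - t) * hr x + t * hr x'
              - μ / 2 * ((1 - t) * t) * q : ℝ) : EReal) := by
            have h2 := add_le_add hB' (le_refl ((μ / 2 * ‖yt‖ ^ 2 : ℝ) : EReal))
            have h3 : h yt + ((-(μ / 2) * ‖yt‖ ^ 2 : ℝ) : EReal)
                + ((μ / 2 * ‖yt‖ ^ 2 : ℝ) : EReal) = h yt := by
              rw [add_assoc, ← EReal.coe_add]
              norm_num
            rw [h3] at h2
            refine h2.trans_eq ?_
            rw [← EReal.coe_add, EReal.coe_eq_coe_iff, hnorm]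
            ring
          calc (((1 - t) * Φ x y₀ + t * Φ x y' + μ / 2 * ((1 - t) * t) * q
                - ((1 - t) * hr x + t * hr x') : ℝ) : EReal)
              ≤ ((Φ x yt - ((1 - t) * hr x + t * hr x'
                  - μ / 2 * ((1 - t) * t) * q) : ℝ) : EReal) := by
                exact_mod_cast (by linarith [hc] :
                  (1 - t) * Φ x y₀ + t * Φ x y' + μ / 2 * ((1 - t) * t) * q
                  - ((1 - t) * hr x + t * hr x')
                  ≤ Φ x yt - ((1 - t) * hr x + t * hr x' - μ / 2 * ((1 - t) * t) * q))
            _ = ((Φ x yt : ℝ) : EReal) - (((1 - t) * hr x + t * hr x'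
                  - μ / 2 * ((1 - t) * t) * q : ℝ) : EReal) := by
                rw [← EReal.coe_sub]
            _ ≤ ((Φ x yt : ℝ) : EReal) - h yt := EReal.sub_le_sub le_rfl hh'
      have hup : ((Φ x yt : ℝ) : EReal) - h yt ≤ ((φ x : ℝ) : EReal) := by
        rw [hφ x]; exact hystar x yt
      have hreal : (1 - t) * Φ x y₀ + t * Φ x y' + μ / 2 * ((1 - t) * t) * q
          - ((1 - t) * hr x + t * hr x') ≤ φ x := by
        exact_mod_cast hΦh.trans hup
      have hφx : φ x = Φ x y₀ - hr x := by rw [hy₀]; exact hφr x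
      rw [hφx] at hreal ⊢
      have hkey : t * ((Φ x y' - hr x' + μ / 2 * (1 - t) * q)
          - (Φ x y₀ - hr x)) ≤ 0 := by nlinarith [hreal]
      nlinarith [hkey, ht0]
    have htend : Filter.Tendsto (fun t : ℝ => Φ x y' - hr x' + μ / 2 * (1 - t) * q)
        (nhdsWithin 0 (Set.Ioi 0)) (nhds (Φ x y' - hr x' + μ / 2 * (1 - 0) * q)) := by
      apply Filter.Tendsto.mono_left _ nhdsWithin_le_nhds
      exact (Continuous.tendsto (by fun_prop) 0)
    have hfin : Φ x y' - hr x' + μ / 2 * (1 - 0) * q ≤ φ x :=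
      le_of_tendsto htend (Filter.eventually_of_mem
        (Ioo_mem_nhdsGT_of_mem ⟨le_refl 0, one_pos⟩) step)
    linarith [hfin]
  -- y* is κ-Lipschitz
  have hyLip : ∀ x x', ‖ystar x - ystar x'‖ ≤ κ * ‖x - x'‖ := by
    intro x x'
    by_cases hΔ : ystar x = ystar x'
    · rw [hΔ, sub_self, norm_zero]
      exact mul_nonneg (by linarith) (norm_nonneg _)
    · have q1 := hquad x x'
      have q2 := hquad x' x
      have hgrad : ∀ z, HasGradientAt (fun y => Φ x y - Φ x' y) (Gy x z - Gy x' z) z := by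
        intro z
        rw [hasGradientAt_iff_hasFDerivAt, map_sub]
        exact ((hGy x z).hasFDerivAt).sub ((hGy x' z).hasFDerivAt)
      have hlip := aux_lip' (fun y => Φ x y - Φ x' y) (fun z => Gy x z - Gy x' z) hgrad
        (L * ‖x - x'‖) (fun z => hGyLipx x x' z) (ystar x) (ystar x')
      have hΔpos : 0 < ‖ystar x - ystar x'‖ := by
        rw [norm_pos_iff]; exact sub_ne_zero.mpr hΔ
      have hrev : ‖ystar x' - ystar x‖ = ‖ystar x - ystar x'‖ := norm_sub_rev _ _
      have hμΔ : μ * ‖ystar x - ystar x'‖ ^ 2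
          ≤ L * ‖x - x'‖ * ‖ystar x - ystar x'‖ := by
        have habs := abs_le.mp hlip
        rw [hφr x] at q1
        rw [hφr x'] at q2
        rw [hrev] at q1
        nlinarith [q1, q2, habs.2]
      have h1 : ‖ystar x - ystar x'‖ ≤ L / μ * ‖x - x'‖ := by
        rw [div_mul_eq_mul_div, le_div_iff₀ hμ]
        nlinarith [hμΔ, hΔpos]
      exact h1.trans (mul_le_mul_of_nonneg_right hκLμ (norm_nonneg _))
  constructor
  · -- differentiability
    intro x
    set y₀ := ystar x with hy₀
    set g₀ := Gx x y₀ with hg₀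
    clear_value y₀ g₀
    rw [hasGradientAt_iff_hasFDerivAt]
    set T := InnerProductSpace.toDual ℝ (EuclideanSpace ℝ (Fin d))
    refine hasFDerivAt_iff_isLittleO.mpr ?_
    have he : (fun x' => Φ x' y₀ - Φ x y₀ - (T g₀) (x' - x)) =o[nhds x]
        fun x' => x' - x := by
      rw [hg₀]; exact ((hGx x y₀).hasFDerivAt).isLittleO
    set C := L * (1 + κ) with hC
    clear_value C
    have hC0 : 0 ≤ C := by
      rw [hC]
      have h1κ : (0:ℝ) ≤ 1 + κ := by linarith
      positivity
    have hbound : ∀ x', ‖φ x' - φ x - (T g₀) (x' - x)‖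
        ≤ ‖(|Φ x' y₀ - Φ x y₀ - (T g₀) (x' - x)| + C * ‖x' - x‖ ^ 2 : ℝ)‖ := by
      intro x'
      set y' := ystar x' with hy'
      clear_value y'
      have hTapp : (T g₀) (x' - x) = ⟪g₀, x' - x⟫ := InnerProductSpace.toDual_apply_apply
      have hlow : Φ x' y₀ - Φ x y₀ ≤ φ x' - φ x := by
        have := hsand x x'
        have h2 := hφr x
        rw [← hy₀] at this h2
        linarith
      have hup : φ x' - φ x ≤ Φ x' y' - Φ x y' := by
        have := hsand x' x
        have h2 := hφr x'
        rw [← hy'] at this h2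
        linarith
      have htay : |Φ x' y' - Φ x y' - ⟪Gx x y', x' - x⟫| ≤ L * ‖x' - x‖ ^ 2 :=
        aux_taylor' (fun z => Φ z y') (fun z => Gx z y') (fun z => hGx z y') L hL.le x x'
          (fun z => hGxLipx z x y')
      have hcs : |⟪Gx x y', x' - x⟫ - ⟪g₀, x' - x⟫| ≤ L * κ * ‖x' - x‖ ^ 2 := by
        rw [← inner_sub_left]
        calc |⟪Gx x y' - g₀, x' - x⟫| ≤ ‖Gx x y' - g₀‖ * ‖x' - x‖ :=
              abs_real_inner_le_norm _ _
          _ ≤ (L * (κ * ‖x' - x‖)) * ‖x' - x‖ := by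
              apply mul_le_mul_of_nonneg_right _ (norm_nonneg _)
              calc ‖Gx x y' - g₀‖ ≤ L * ‖y' - y₀‖ := by
                    rw [hg₀]; exact hGxLipy x y' y₀
                _ ≤ L * (κ * ‖x' - x‖) := by
                    apply mul_le_mul_of_nonneg_left _ hL.le
                    rw [hy', hy₀]; exact hyLip x' x
          _ = L * κ * ‖x' - x‖ ^ 2 := by ring
      have habs : |φ x' - φ x - (T g₀) (x' - x)|
          ≤ |Φ x' y₀ - Φ x y₀ - (T g₀) (x' - x)| + C * ‖x' - x‖ ^ 2 := by
        rw [hTapp] at *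
        rw [abs_le]
        constructor
        · have h1 : -(|Φ x' y₀ - Φ x y₀ - ⟪g₀, x' - x⟫|)
              ≤ Φ x' y₀ - Φ x y₀ - ⟪g₀, x' - x⟫ := neg_abs_le _
          have h2 : 0 ≤ C * ‖x' - x‖ ^ 2 := by positivity
          linarith
        · have h1 := (abs_le.mp htay).2
          have h2 := (abs_le.mp hcs).2
          have h3 : 0 ≤ |Φ x' y₀ - Φ x y₀ - ⟪g₀, x' - x⟫| := abs_nonneg _
          have : φ x' - φ x - ⟪g₀, x' - x⟫ ≤ C * ‖x' - x‖ ^ 2 := by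
            rw [hC]
            nlinarith [hup, h1, h2]
          linarith
      rw [Real.norm_eq_abs, Real.norm_eq_abs]
      refine habs.trans (le_abs_self _)
    have h1 := Asymptotics.isBigO_of_le (nhds x) hbound
    have h2 : (fun x' => |Φ x' y₀ - Φ x y₀ - (T g₀) (x' - x)| + C * ‖x' - x‖ ^ 2)
        =o[nhds x] fun x' => x' - x := by
      apply Asymptotics.IsLittleO.add
      · simpa [Real.norm_eq_abs] using he.norm_left
      · rw [← Asymptotics.isLittleO_norm_right]
        have ht : Filter.Tendsto (fun x' => ‖x' - x‖) (nhds x) (nhds 0) := by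
          have h4 : Filter.Tendsto (fun x' : EuclideanSpace ℝ (Fin d) => x' - x)
              (nhds x) (nhds (x - x)) := (continuous_id.sub continuous_const).tendsto x
          have h5 := h4.norm
          rwa [sub_self, norm_zero] at h5
        have h4 : (fun x' => ‖x' - x‖) =o[nhds x] (fun _ => (1:ℝ)) :=
          (Asymptotics.isLittleO_one_iff ℝ).mpr ht
        have h5 := (h4.mul_isBigO
          (Asymptotics.isBigO_refl (fun x' => ‖x' - x‖) (nhds x))).const_mul_left C
        have h6 : (fun x' => C * (‖x' - x‖ * ‖x' - x‖))
            = fun x' => C * ‖x' - x‖ ^ 2 := by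
          funext x'; ring
        rw [h6] at h5
        simpa using h5
    exact h1.trans_isLittleO h2
  · -- Lipschitz continuity of the gradient
    intro x x'
    have htri : ‖Gx x (ystar x) - Gx x' (ystar x')‖
        ≤ ‖Gx x (ystar x) - Gx x' (ystar x)‖ + ‖Gx x' (ystar x) - Gx x' (ystar x')‖ := by
      have : Gx x (ystar x) - Gx x' (ystar x')
          = (Gx x (ystar x) - Gx x' (ystar x)) + (Gx x' (ystar x) - Gx x' (ystar x')) := by
        abel
      rw [this]
      exact norm_add_le _ _
    calc ‖Gx x (ystar x) - Gx x' (ystar x')‖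
        ≤ ‖Gx x (ystar x) - Gx x' (ystar x)‖ + ‖Gx x' (ystar x) - Gx x' (ystar x')‖ := htri
      _ ≤ L * ‖x - x'‖ + L * (κ * ‖x - x'‖) := by
          apply add_le_add (hGxLipx x x' (ystar x))
          exact (hGxLipy x' (ystar x) (ystar x')).trans
            (mul_le_mul_of_nonneg_left (hyLip x x') hL.le)
      _ = L * (1 + κ) * ‖x - x'‖ := by ring
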